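/- Let Q ⊆ ℝ^d be a compact convex set. If finitely many open half-spaces h_1, ..., h_n cover Q, then there exists a subfamily of at most d+1 of these half-spaces that also covers Q. -/
import Mathlib

theorem stmt_3 (d n : ℕ) (Q : Set (Fin d → ℝ))
    (hQc : IsCompact Q) (hQconv : Convex ℝ Q)
    (a : Fin n → (Fin d → ℝ)) (c : Fin n → ℝ) (ha : ∀ i, a i ≠ 0)
    (hcov : Q ⊆ ⋃ i, {x : Fin d → ℝ | ∑ k, a i k * x k < c i}) :
    ∃ t : Finset (Fin n), t.card ≤ d + 1 ∧
      Q ⊆ ⋃ i ∈ t, {x : Fin d → ℝ | ∑ k, a i k * x k < c i} := by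
  rcases Nat.eq_zero_or_pos n with hn | hn
  · subst hn
    refine ⟨∅, by simp, fun x hx => ?_⟩
    exact absurd (hcov hx) (by simp)
  by_contra h
  push_neg at h
  set F : Fin n → Set (Fin d → ℝ) := fun i => Q ∩ {x | c i ≤ ∑ k, a i k * x k} with hF
  have hlin : ∀ i, IsLinearMap ℝ (fun x : Fin d → ℝ => ∑ k, a i k * x k) := by
    intro i
    constructor
    · intro x y; simp [mul_add, Finset.sum_add_distrib]
    · intro r x; simp [Finset.mul_sum]; exact Finset.sum_congr rfl fun k _ => by ring
  have hconv : ∀ i, Convex ℝ (F i) :=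
    fun i => hQconv.inter (convex_halfSpace_ge (hlin i) (c i))
  have hcomp : ∀ i, IsCompact (F i) := by
    intro i
    apply hQc.inter_right
    have : Continuous fun x : Fin d → ℝ => ∑ k, a i k * x k := by
      continuity
    exact isClosed_le continuous_const this
  have hne : (⋂ i, F i).Nonempty := by
    apply Convex.helly_theorem_compact' (𝕜 := ℝ) hconv hcomp
    intro I hI
    rw [Module.finrank_fintype_fun_eq_card, Fintype.card_fin] at hI
    obtain ⟨x, hxQ, hxn⟩ := Set.not_subset.mp (h I hI)
    refine ⟨x, Set.mem_iInter₂.mpr fun i hi => ⟨hxQ, Set.mem_setOf_eq ▸ le_of_not_gt fun hlt => ?_⟩⟩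
    exact hxn (Set.mem_biUnion hi hlt)
  obtain ⟨x, hx⟩ := hne
  simp only [Set.mem_iInter, hF, Set.mem_inter_iff, Set.mem_setOf_eq] at hx
  obtain ⟨i, hi⟩ := Set.mem_iUnion.mp (hcov (hx ⟨0, hn⟩).1)
  exact absurd hi (not_lt.mpr (hx i).2)
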